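/- arXiv:2003.00314 — 5 statements merged into one kernel-verified Lean document; each statement's English description precedes it below -/
import Mathlib

section
/- Let p be an odd prime, d ≥ 2 an integer, ℓ = ord_p(d), and j ∈ {2,...,d-1}. Then j + ord_p(binomial(d,j)) ≥ 2 + ℓ. -/
theorem stmt_0 (p : ℕ) (hp : p.Prime) (hodd : Odd p) (d : ℕ) (hd : 2 ≤ d)
    (ℓ : ℕ) (hℓ : ℓ = padicValNat p d) (j : ℕ) (hj1 : 2 ≤ j) (hj2 : j ≤ d - 1) :
    2 + ℓ ≤ j + padicValNat p (d.choose j) := by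
  haveI : Fact p.Prime := ⟨hp⟩
  have hp2 : 2 ≤ p := hp.two_le
  have hpodd : p % 2 = 1 := Nat.odd_iff.mp hodd
  have hp3 : 3 ≤ p := by omega
  have hjd : j ≤ d := le_trans hj2 (Nat.sub_le d 1)
  have hc0 : d.choose j ≠ 0 := (Nat.choose_pos hjd).ne'
  have hid : d * (d - 1).choose (j - 1) = d.choose j * j := by
    have h := Nat.add_one_mul_choose_eq (d - 1) (j - 1)
    simpa only [Nat.succ_eq_add_one, Nat.sub_add_cancel (by omega : 1 ≤ d),
      Nat.sub_add_cancel (by omega : 1 ≤ j)] using h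
  have hcc0 : (d - 1).choose (j - 1) ≠ 0 := (Nat.choose_pos (by omega)).ne'
  have hval : padicValNat p d + padicValNat p ((d - 1).choose (j - 1)) =
      padicValNat p (d.choose j) + padicValNat p j := by
    rw [← padicValNat.mul (by omega) hcc0, ← padicValNat.mul hc0 (by omega), hid]
  set v := padicValNat p j with hv
  have hpv : p ^ v ∣ j := pow_padicValNat_dvd
  have hle : p ^ v ≤ j := Nat.le_of_dvd (by omega) hpv
  have hjv : v + 2 ≤ j := by
    rcases Nat.eq_zero_or_pos v with h0 | h1
    · omega
    · have h3 : 3 ^ v ≤ p ^ v := Nat.pow_le_pow_left hp3 v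
      have h4 : v - 1 < 3 ^ (v - 1) := Nat.lt_pow_self (by norm_num : 1 < 3)
      have h5 : 3 ^ v = 3 * 3 ^ (v - 1) := by
        conv_lhs => rw [show v = (v - 1) + 1 by omega]
        ring
      omega
  omega
end

section
/- Let p be a prime, h ≥ 3 and d ≥ 4 integers, and let g(x) = p^{2h}·(x + p^{h-1})^d - x². Define G(x) = g(p^{(h-1)d/2 + h}·x) / p^{(h-1)d + 2h} (assume d is even so the exponent (h-1)d/2 is an integer). Then G ∈ Z_p[x] and G(x) ≡ 1 - x² mod p^{d(h-1)/2 + 1}. -/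
open Polynomial

private lemma aux1C {R : Type*} [CommRing R] (a b u v w : R) (k n : ℕ) :
    C a * (C b * ((C u * X) ^ k * C v ^ n * C w)) = C (a * b * u ^ k * v ^ n * w) * X ^ k := by
  simp only [C_mul, C_pow]; ring

theorem stmt_10 (p : ℕ) [Fact p.Prime] (h d : ℕ) (hh : 3 ≤ h) (hd : 4 ≤ d) (hde : Even d)
    (g G : Polynomial ℚ_[p])
    (hg : g = C ((p : ℚ_[p]) ^ (2 * h)) * (X + C ((p : ℚ_[p]) ^ (h - 1))) ^ d - X ^ 2)
    (hG : G = C (((p : ℚ_[p]) ^ ((h - 1) * d + 2 * h))⁻¹) *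
        g.comp (C ((p : ℚ_[p]) ^ ((h - 1) * d / 2 + h)) * X)) :
    (∀ n, ‖G.coeff n‖ ≤ 1) ∧
    (∀ n, ‖(G - (1 - X ^ 2)).coeff n‖ ≤ (p : ℝ) ^ (-((d * (h - 1) / 2 + 1 : ℕ) : ℤ))) := by
  obtain ⟨t, ht⟩ := hde
  subst ht
  have hp1 : 1 < p := (Fact.out (p := p.Prime)).one_lt
  have hp0 : (p : ℚ_[p]) ≠ 0 := Nat.cast_ne_zero.mpr (by omega)
  have h1 : 1 ≤ h := by omega
  have hq : (h - 1) * (t + t) / 2 = (h - 1) * t := by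
    rw [show (h - 1) * (t + t) = (h - 1) * t * 2 by ring, Nat.mul_div_cancel _ two_pos]
  have hq2 : (t + t) * (h - 1) / 2 = (h - 1) * t := by
    rw [show (t + t) * (h - 1) = (h - 1) * t * 2 by ring, Nat.mul_div_cancel _ two_pos]
  have normnat : ∀ a : ℕ, ‖((a : ℕ) : ℚ_[p])‖ ≤ 1 := fun a => by
    simpa using Padic.norm_int_le_one (p := p) (a : ℤ)
  have hGeq : G = (∑ k ∈ Finset.range (t + t + 1),
      C ((((t + t).choose k : ℕ) : ℚ_[p]) * ((p : ℚ_[p]) ^ ((h - 1) * t + 1)) ^ k) * X ^ k)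
      - X ^ 2 := by
    rw [hG, hg]
    simp only [sub_comp, mul_comp, pow_comp, add_comp, X_comp, C_comp, hq]
    rw [add_pow, mul_sub, Finset.mul_sum, Finset.mul_sum]
    congr 1
    · refine Finset.sum_congr rfl fun k hk => ?_
      rw [Finset.mem_range] at hk
      have hk' : k ≤ t + t := by omega
      rw [← Polynomial.C_eq_natCast, aux1C]
      congr 1
      congr 1
      have key : (p : ℚ_[p]) ^ (2 * h) * ((p : ℚ_[p]) ^ ((h - 1) * t + h)) ^ k *
          ((p : ℚ_[p]) ^ (h - 1)) ^ (t + t - k) =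
          (p : ℚ_[p]) ^ ((h - 1) * (t + t) + 2 * h) * ((p : ℚ_[p]) ^ ((h - 1) * t + 1)) ^ k := by
        rw [← pow_mul, ← pow_mul, ← pow_mul, ← pow_add, ← pow_add, ← pow_add]
        exact congrArg (fun j => (p : ℚ_[p]) ^ j) (by zify [hk', h1]; ring)
      have key3 : (p : ℚ_[p]) ^ (2 * h) * ((p : ℚ_[p]) ^ ((h - 1) * t + h)) ^ k *
          ((p : ℚ_[p]) ^ (h - 1)) ^ (t + t - k) * (((t + t).choose k : ℕ) : ℚ_[p]) =
          (p : ℚ_[p]) ^ ((h - 1) * (t + t) + 2 * h) *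
          ((((t + t).choose k : ℕ) : ℚ_[p]) * ((p : ℚ_[p]) ^ ((h - 1) * t + 1)) ^ k) := by
        linear_combination (((t + t).choose k : ℕ) : ℚ_[p]) * key
      calc ((p : ℚ_[p]) ^ ((h - 1) * (t + t) + 2 * h))⁻¹ * (p : ℚ_[p]) ^ (2 * h) *
            ((p : ℚ_[p]) ^ ((h - 1) * t + h)) ^ k * ((p : ℚ_[p]) ^ (h - 1)) ^ (t + t - k) *
            (((t + t).choose k : ℕ) : ℚ_[p])
          = ((p : ℚ_[p]) ^ ((h - 1) * (t + t) + 2 * h))⁻¹ * ((p : ℚ_[p]) ^ (2 * h) *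
            ((p : ℚ_[p]) ^ ((h - 1) * t + h)) ^ k * ((p : ℚ_[p]) ^ (h - 1)) ^ (t + t - k) *
            (((t + t).choose k : ℕ) : ℚ_[p])) := by ring
        _ = ((p : ℚ_[p]) ^ ((h - 1) * (t + t) + 2 * h))⁻¹ *
            ((p : ℚ_[p]) ^ ((h - 1) * (t + t) + 2 * h) *
            ((((t + t).choose k : ℕ) : ℚ_[p]) * ((p : ℚ_[p]) ^ ((h - 1) * t + 1)) ^ k)) := by
            rw [key3]
        _ = (((t + t).choose k : ℕ) : ℚ_[p]) * ((p : ℚ_[p]) ^ ((h - 1) * t + 1)) ^ k :=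
            inv_mul_cancel_left₀ (pow_ne_zero _ hp0) _
    · rw [mul_pow, ← C_pow, ← mul_assoc, ← C_mul,
        show ((p : ℚ_[p]) ^ ((h - 1) * t + h)) ^ 2 = (p : ℚ_[p]) ^ ((h - 1) * (t + t) + 2 * h) by
          rw [← pow_mul]; congr 1; ring,
        inv_mul_cancel₀ (pow_ne_zero _ hp0), C_1, one_mul]
  have hnormpow : ∀ j : ℕ, ‖((p : ℚ_[p]) ^ j)‖ ≤ 1 := fun j => by
    rw [norm_pow, Padic.norm_p]
    exact pow_le_one₀ (by positivity) (inv_le_one_of_one_le₀ (by exact_mod_cast hp1.le))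
  constructor
  · intro n
    rw [hGeq, coeff_sub, finset_sum_coeff]
    simp only [coeff_C_mul, coeff_X_pow, mul_ite, mul_one, mul_zero, Finset.sum_ite_eq, Finset.sum_ite_eq',
      Finset.mem_range, Nat.lt_succ_iff]
    have B1 : ‖(if n ≤ t + t then (((t + t).choose n : ℕ) : ℚ_[p]) *
        ((p : ℚ_[p]) ^ ((h - 1) * t + 1)) ^ n else 0)‖ ≤ 1 := by
      split
      · rw [norm_mul, ← pow_mul]
        calc ‖(((t + t).choose n : ℕ) : ℚ_[p])‖ * ‖(p : ℚ_[p]) ^ (((h - 1) * t + 1) * n)‖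
            ≤ 1 * 1 := mul_le_mul (normnat _) (hnormpow _) (norm_nonneg _) zero_le_one
          _ = 1 := by ring
      · simp
    have B2 : ‖(if n = 2 then (1 : ℚ_[p]) else 0)‖ ≤ 1 := by split <;> simp
    have h3 := Padic.nonarchimedean
      (if n ≤ t + t then (((t + t).choose n : ℕ) : ℚ_[p]) *
        ((p : ℚ_[p]) ^ ((h - 1) * t + 1)) ^ n else 0)
      (-(if n = 2 then (1 : ℚ_[p]) else 0))
    rw [norm_neg] at h3
    rw [sub_eq_add_neg]
    exact h3.trans (max_le B1 B2)
  · intro n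
    rw [hGeq, show (∑ k ∈ Finset.range (t + t + 1),
        C ((((t + t).choose k : ℕ) : ℚ_[p]) * ((p : ℚ_[p]) ^ ((h - 1) * t + 1)) ^ k) * X ^ k)
        - X ^ 2 - (1 - X ^ 2) = (∑ k ∈ Finset.range (t + t + 1),
        C ((((t + t).choose k : ℕ) : ℚ_[p]) * ((p : ℚ_[p]) ^ ((h - 1) * t + 1)) ^ k) * X ^ k)
        - 1 from by ring]
    rw [coeff_sub, finset_sum_coeff]
    simp only [coeff_C_mul, coeff_X_pow, mul_ite, mul_one, mul_zero, Finset.sum_ite_eq, Finset.sum_ite_eq',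
      Finset.mem_range, Nat.lt_succ_iff, coeff_one, hq2]
    rcases Nat.eq_zero_or_pos n with hn | hn
    · subst hn
      simp only [if_pos (Nat.zero_le (t + t)), if_pos rfl, if_true, Nat.choose_zero_right, pow_zero,
        Nat.cast_one, one_mul, sub_self, norm_zero]
      positivity
    · rw [if_neg (by omega : ¬ n = 0), sub_zero]
      split
      · rw [norm_mul, ← pow_mul, Padic.norm_p_pow]
        have hple : (1 : ℝ) ≤ (p : ℝ) := by exact_mod_cast hp1.le
        have hle : (((h - 1) * t + 1 : ℕ) : ℤ) ≤ ((((h - 1) * t + 1) * n : ℕ) : ℤ) := by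
          exact_mod_cast Nat.le_mul_of_pos_right _ hn
        calc ‖(((t + t).choose n : ℕ) : ℚ_[p])‖ * (p : ℝ) ^ (-((((h - 1) * t + 1) * n : ℕ) : ℤ))
            ≤ 1 * (p : ℝ) ^ (-((((h - 1) * t + 1) * n : ℕ) : ℤ)) :=
              mul_le_mul_of_nonneg_right (normnat _) (by positivity)
          _ = (p : ℝ) ^ (-((((h - 1) * t + 1) * n : ℕ) : ℤ)) := one_mul _
          _ ≤ (p : ℝ) ^ (-(((h - 1) * t + 1 : ℕ) : ℤ)) :=
              zpow_le_zpow_right₀ hple (neg_le_neg hle)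
      · rw [norm_zero]
        positivity
end

section
/- Let p be an odd prime, h ≥ 3 an integer, and d ≥ 4 an even integer with d ≤ e^h. Then the tetranomial f(x) = x^d - p^{-2h}x² + 2p^{-(h+1)}x - p^{-2} has two distinct roots x₁, x₂ ∈ Q_p with |x₁ - x₂|_p ≤ p^{-((h-1)d/2 + h)}. -/
open Polynomial in
lemma aux_root_stmt11 (p : ℕ) [Fact p.Prime] (K m : ℕ) (hK : 1 ≤ K)
    (ε : ℤ_[p]) (hε : ε = 1 ∨ ε = -1) :
    ∃ z : ℤ_[p], (p:ℤ_[p])^K * z^m = ε * (z - 1) := by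
  set c : ℤ_[p] := (p:ℤ_[p])^K with hc
  have hplt : (1:ℝ) < p := by exact_mod_cast (Fact.out : p.Prime).one_lt
  have hcnorm : ‖c‖ < 1 := by
    rw [hc, PadicInt.norm_p_pow, zpow_neg]
    rw [inv_lt_one_iff₀]; right
    exact one_lt_zpow₀ hplt (by omega)
  have hεnorm : ‖ε‖ = 1 := by rcases hε with rfl | rfl <;> simp
  set F : Polynomial ℤ_[p] := C c * X^m - C ε * X + C ε with hF
  have heval : F.eval 1 = c := by simp [hF]
  have hderiv : F.derivative.eval 1 = c * m - ε := by
    simp [hF, derivative_X_pow]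
  have hcm : ‖c * (m:ℤ_[p])‖ < 1 := by
    calc ‖c * (m:ℤ_[p])‖ = ‖c‖ * ‖(m:ℤ_[p])‖ := norm_mul _ _
      _ ≤ ‖c‖ * 1 := by gcongr; exact PadicInt.norm_le_one _
      _ < 1 := by simpa using hcnorm
  have hdnorm : ‖F.derivative.eval 1‖ = 1 := by
    rw [hderiv, sub_eq_add_neg, PadicInt.norm_add_eq_max_of_ne]
    · simp only [norm_neg, hεnorm]
      rw [max_eq_right hcm.le]
    · rw [norm_neg, hεnorm]; exact hcm.ne
  have hnorm : ‖F.eval 1‖ < ‖F.derivative.eval 1‖ ^ 2 := by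
    rw [heval, hdnorm]; simpa using hcnorm
  obtain ⟨z, hz, -⟩ := hensels_lemma hnorm
  refine ⟨z, ?_⟩
  have : c * z^m - ε * z + ε = 0 := by simpa [hF] using hz
  linear_combination this

lemma aux_pow_sub_one_stmt11 (p : ℕ) [Fact p.Prime] (z : ℤ_[p]) (m : ℕ) :
    ‖z ^ m - 1‖ ≤ ‖z - 1‖ := by
  rw [← geom_sum_mul z m, norm_mul]
  calc ‖∑ i ∈ Finset.range m, z ^ i‖ * ‖z - 1‖ ≤ 1 * ‖z - 1‖ := by
        gcongr; exact PadicInt.norm_le_one _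
    _ = ‖z - 1‖ := one_mul _

theorem stmt_11 (p : ℕ) [Fact p.Prime] (hodd : Odd p) (h d : ℕ)
    (hh : 3 ≤ h) (hd : 4 ≤ d) (hde : Even d) (hdh : (d : ℝ) ≤ Real.exp h) :
    ∃ x₁ x₂ : ℚ_[p], x₁ ≠ x₂ ∧
      (x₁ ^ d - ((p : ℚ_[p]) ^ (2 * h))⁻¹ * x₁ ^ 2 +
        2 * ((p : ℚ_[p]) ^ (h + 1))⁻¹ * x₁ - ((p : ℚ_[p]) ^ 2)⁻¹ = 0) ∧
      (x₂ ^ d - ((p : ℚ_[p]) ^ (2 * h))⁻¹ * x₂ ^ 2 +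
        2 * ((p : ℚ_[p]) ^ (h + 1))⁻¹ * x₂ - ((p : ℚ_[p]) ^ 2)⁻¹ = 0) ∧
      ‖x₁ - x₂‖ ≤ (p : ℝ) ^ (-(((h - 1) * d / 2 + h : ℕ) : ℤ)) := by
  have hp : p.Prime := Fact.out
  obtain ⟨m, hm0⟩ := hde
  have hm : d = 2 * m := by omega
  have hm2 : 2 ≤ m := by omega
  set K : ℕ := (h - 1) * m + 1 with hKdef
  obtain ⟨z₁, hz₁⟩ := aux_root_stmt11 p K m (by omega) 1 (Or.inl rfl)
  obtain ⟨z₂, hz₂⟩ := aux_root_stmt11 p K m (by omega) (-1) (Or.inr rfl)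
  rw [one_mul] at hz₁
  have hz₂' : (p:ℤ_[p])^K * z₂^m = 1 - z₂ := by linear_combination hz₂
  set P : ℚ_[p] := (p : ℚ_[p]) with hPdef
  have hP : P ≠ 0 := by
    simp only [hPdef, Ne, Nat.cast_eq_zero]; exact hp.ne_zero
  set a : ℚ_[p] := P ^ (h - 1) with hadef
  have ha : a ≠ 0 := pow_ne_zero _ hP
  clear_value a
  -- coerced root equations in ℚ_p
  have e₁ : P ^ K * (z₁ : ℚ_[p]) ^ m = (z₁ : ℚ_[p]) - 1 := by
    have := congrArg (fun t : ℤ_[p] => (t : ℚ_[p])) hz₁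
    push_cast at this; exact this
  have e₂ : P ^ K * (z₂ : ℚ_[p]) ^ m = 1 - (z₂ : ℚ_[p]) := by
    have := congrArg (fun t : ℤ_[p] => (t : ℚ_[p])) hz₂'
    push_cast at this; exact this
  set x₁ : ℚ_[p] := a * (z₁ : ℚ_[p]) with hx₁def
  set x₂ : ℚ_[p] := a * (z₂ : ℚ_[p]) with hx₂def
  -- power identities
  have hPh : P ^ h = P * a := by
    rw [hadef, ← pow_succ']; congr 1; omega
  have hPK : P * a ^ m = P ^ K := by
    rw [hadef, ← pow_mul, ← pow_succ']
  -- the two linear factors vanish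
  have hfac1 : P ^ h * x₁ ^ m - x₁ + a = 0 := by
    rw [hx₁def, hPh, mul_pow]
    linear_combination a * e₁ + a * (z₁:ℚ_[p]) ^ m * hPK
  have hfac2 : P ^ h * x₂ ^ m + x₂ - a = 0 := by
    rw [hx₂def, hPh, mul_pow]
    linear_combination a * e₂ + a * (z₂:ℚ_[p]) ^ m * hPK
  -- factorization of f
  have key : ∀ x : ℚ_[p],
      (P ^ h * x ^ m - x + a) * (P ^ h * x ^ m + x - a) = 0 →
      x ^ d - (P ^ (2 * h))⁻¹ * x ^ 2 + 2 * (P ^ (h + 1))⁻¹ * x - (P ^ 2)⁻¹ = 0 := by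
    intro x hx
    have hxd : x ^ d = (x ^ m) ^ 2 := by rw [hm, mul_comm, pow_mul]
    have h2h : P ^ (2 * h) = (P * a) ^ 2 := by rw [mul_comm, pow_mul, hPh]
    have hh1 : P ^ (h + 1) = P ^ 2 * a := by rw [pow_succ, hPh]; ring
    rw [hxd, h2h, hh1]
    rw [hPh] at hx
    set y : ℚ_[p] := x ^ m with hydef
    clear_value y
    have hne : ((P * a) ^ 2 : ℚ_[p]) ≠ 0 := pow_ne_zero _ (mul_ne_zero hP ha)
    have i1 : (P * a) ^ 2 * ((P * a) ^ 2)⁻¹ = 1 := mul_inv_cancel₀ hne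
    have i2 : (P * a) ^ 2 * (P ^ 2 * a)⁻¹ = a := by
      rw [show (P * a) ^ 2 = a * (P ^ 2 * a) by ring, mul_assoc,
        mul_inv_cancel₀ (mul_ne_zero (pow_ne_zero 2 hP) ha), mul_one]
    have i3 : (P * a) ^ 2 * (P ^ 2)⁻¹ = a ^ 2 := by
      rw [show (P * a) ^ 2 = a ^ 2 * P ^ 2 by ring, mul_assoc,
        mul_inv_cancel₀ (pow_ne_zero 2 hP), mul_one]
    have H : (P * a) ^ 2 *
        (y ^ 2 - ((P * a) ^ 2)⁻¹ * x ^ 2 + 2 * (P ^ 2 * a)⁻¹ * x - (P ^ 2)⁻¹) = 0 := by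
      linear_combination hx - x ^ 2 * i1 + 2 * x * i2 - i3
    exact (mul_eq_zero.mp H).resolve_left hne
  -- norms
  have hplt : (1:ℝ) < p := by exact_mod_cast hp.one_lt
  have hcZ : ‖((p:ℤ_[p])^K)‖ = (p:ℝ) ^ (-(K:ℤ)) := PadicInt.norm_p_pow K
  have hcle : (p:ℝ) ^ (-(K:ℤ)) < 1 := by
    rw [zpow_neg, inv_lt_one_iff₀]; right
    exact one_lt_zpow₀ hplt (by omega)
  have hz1sub : ‖z₁ - 1‖ < 1 := by
    rw [show z₁ - 1 = (p:ℤ_[p])^K * z₁ ^ m from hz₁.symm, norm_mul, hcZ]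
    calc (p:ℝ) ^ (-(K:ℤ)) * ‖z₁ ^ m‖ ≤ (p:ℝ) ^ (-(K:ℤ)) * 1 :=
          mul_le_mul_of_nonneg_left (PadicInt.norm_le_one _) (by positivity)
      _ < 1 := by rw [mul_one]; exact hcle
  have hz2sub : ‖z₂ - 1‖ < 1 := by
    have heq : z₂ - 1 = -((p:ℤ_[p])^K * z₂ ^ m) := by linear_combination hz₂'
    rw [heq, norm_neg, norm_mul, hcZ]
    calc (p:ℝ) ^ (-(K:ℤ)) * ‖z₂ ^ m‖ ≤ (p:ℝ) ^ (-(K:ℤ)) * 1 :=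
          mul_le_mul_of_nonneg_left (PadicInt.norm_le_one _) (by positivity)
      _ < 1 := by rw [mul_one]; exact hcle
  set w : ℤ_[p] := z₁ ^ m + z₂ ^ m with hwdef
  have hw2 : ‖w - 2‖ < 1 := by
    have heq : w - 2 = (z₁ ^ m - 1) + (z₂ ^ m - 1) := by rw [hwdef]; ring
    rw [heq]
    exact lt_of_le_of_lt (PadicInt.nonarchimedean _ _)
      (max_lt (lt_of_le_of_lt (aux_pow_sub_one_stmt11 p z₁ m) hz1sub)
        (lt_of_le_of_lt (aux_pow_sub_one_stmt11 p z₂ m) hz2sub))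
  have h2norm : ‖(2:ℤ_[p])‖ = 1 := by
    have hle := PadicInt.norm_le_one (2:ℤ_[p])
    rcases lt_or_eq_of_le hle with hlt | heq
    · exfalso
      have hdvd : ((p:ℤ)) ∣ (2:ℤ) :=
        (PadicInt.norm_int_lt_one_iff_dvd (2:ℤ)).1 (by exact_mod_cast hlt)
      have hdvd' : p ∣ 2 := by exact_mod_cast hdvd
      have hp2 : p = 2 := ((Nat.prime_dvd_prime_iff_eq hp Nat.prime_two).1 hdvd')
      rw [Nat.odd_iff] at hodd; omega
    · exact heq
  have hwnorm : ‖w‖ = 1 := by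
    have heq : w = 2 + (w - 2) := by ring
    rw [heq, PadicInt.norm_add_eq_max_of_ne]
    · rw [h2norm]; exact max_eq_left hw2.le
    · rw [h2norm]; exact hw2.ne'
  have hwne : w ≠ 0 := by
    intro h0; rw [h0, norm_zero] at hwnorm; norm_num at hwnorm
  have hdiff : z₁ - z₂ = (p:ℤ_[p])^K * w := by
    rw [hwdef]; linear_combination -hz₁ - hz₂'
  have hcne : ((p:ℤ_[p])^K) ≠ 0 := by
    intro h0; rw [h0, norm_zero] at hcZ
    have hpos : (0:ℝ) < (p:ℝ) ^ (-(K:ℤ)) := by positivity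
    rw [← hcZ] at hpos; exact lt_irrefl _ hpos
  have hzne : z₁ ≠ z₂ := by
    intro heq
    have h0 : (0:ℤ_[p]) = (p:ℤ_[p])^K * w := by rw [← hdiff, heq, sub_self]
    exact (mul_ne_zero hcne hwne) h0.symm
  refine ⟨x₁, x₂, ?_, key x₁ (by rw [hfac1, zero_mul]),
    key x₂ (by rw [hfac2, mul_zero]), ?_⟩
  · rw [hx₁def, hx₂def]
    intro heq
    exact hzne (Subtype.coe_injective (mul_left_cancel₀ ha heq))
  · have hxx : x₁ - x₂ = a * ((z₁ - z₂ : ℤ_[p]) : ℚ_[p]) := by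
      rw [hx₁def, hx₂def]; push_cast; ring
    rw [hxx, norm_mul, PadicInt.padic_norm_e_of_padicInt, hdiff, norm_mul, hcZ]
    have hanorm : ‖a‖ = (p:ℝ) ^ (-((h-1:ℕ):ℤ)) := by
      rw [hadef, hPdef]; exact Padic.norm_p_pow (h-1)
    rw [hanorm, hwnorm, mul_one, ← zpow_add₀ (by positivity : (p:ℝ) ≠ 0)]
    have hnat : (h-1) + K = (h - 1) * d / 2 + h := by
      have hdd : (h - 1) * d / 2 = (h - 1) * m := by
        rw [hm, show (h-1)*(2*m) = ((h-1)*m)*2 by ring, Nat.mul_div_cancel _ two_pos]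
      rw [hdd, hKdef]
      generalize (h-1)*m = t
      omega
    have hexp : (-((h-1:ℕ):ℤ)) + (-(K:ℤ)) = -(((h - 1) * d / 2 + h : ℕ) : ℤ) := by
      rw [← hnat]; push_cast; ring
    rw [hexp]
end

section
/- Let p be a prime and f ∈ Z[x] with f(0) ≠ 0. Suppose ζ ∈ Z_p is a degenerate root of f, i.e., f(ζ) = f'(ζ) = 0. Write f(x) = c₁ + c₂x^{a₂} + c₃x^{a₃} with c₁, c₂, c₃ nonzero integers and a₃ > a₂ ≥ 1. Then ζ ≠ 0, and ζ satisfies the two binomial equations (a₃ - a₂)·c₂·ζ^{a₂} = -c₁·a₃ and -a₃·c₃·ζ^{a₃ - a₂} = c₂·a₂. -/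
theorem stmt_14 (p : ℕ) [Fact p.Prime]
    (c₁ c₂ c₃ : ℤ) (hc₁ : c₁ ≠ 0) (hc₂ : c₂ ≠ 0) (hc₃ : c₃ ≠ 0)
    (a₂ a₃ : ℕ) (ha₂ : 1 ≤ a₂) (ha : a₂ < a₃)
    (ζ : ℤ_[p])
    (hroot : (c₁ : ℤ_[p]) + (c₂ : ℤ_[p]) * ζ ^ a₂ + (c₃ : ℤ_[p]) * ζ ^ a₃ = 0)
    (hderiv : (a₂ : ℤ_[p]) * (c₂ : ℤ_[p]) * ζ ^ (a₂ - 1) +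
      (a₃ : ℤ_[p]) * (c₃ : ℤ_[p]) * ζ ^ (a₃ - 1) = 0) :
    ζ ≠ 0 ∧
    ((a₃ : ℤ_[p]) - (a₂ : ℤ_[p])) * (c₂ : ℤ_[p]) * ζ ^ a₂ = -(c₁ : ℤ_[p]) * (a₃ : ℤ_[p]) ∧
    -(a₃ : ℤ_[p]) * (c₃ : ℤ_[p]) * ζ ^ (a₃ - a₂) = (c₂ : ℤ_[p]) * (a₂ : ℤ_[p]) := by
  have hz : ζ ≠ 0 := by
    intro h
    subst h
    rw [zero_pow (by omega : a₂ ≠ 0), zero_pow (by omega : a₃ ≠ 0)] at hroot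
    simp at hroot
    exact hc₁ (by exact_mod_cast hroot)
  have e2 : ζ ^ (a₂ - 1) * ζ = ζ ^ a₂ := by
    rw [← pow_succ, Nat.sub_add_cancel ha₂]
  have e3 : ζ ^ (a₃ - 1) * ζ = ζ ^ a₃ := by
    rw [← pow_succ, Nat.sub_add_cancel (by omega)]
  have h1 : (a₂ : ℤ_[p]) * c₂ * ζ ^ a₂ + (a₃ : ℤ_[p]) * c₃ * ζ ^ a₃ = 0 := by
    have h := congrArg (· * ζ) hderiv
    simp only [add_mul, mul_assoc, e2, e3, zero_mul] at h
    linear_combination h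
  refine ⟨hz, by linear_combination (a₃ : ℤ_[p]) * hroot - h1, ?_⟩
  have key : (-(a₃ : ℤ_[p]) * c₃ * ζ ^ (a₃ - a₂)) * ζ ^ a₂ = ((c₂ : ℤ_[p]) * a₂) * ζ ^ a₂ := by
    rw [mul_assoc, ← pow_add, Nat.sub_add_cancel (le_of_lt ha)]
    linear_combination -h1
  exact mul_right_cancel₀ (pow_ne_zero _ hz) key
end

section
/- Let p be an odd prime and f(x) = c₁ + c₂x^d ∈ Z[x] with p ∤ c₁c₂, and let ℓ = ord_p(d). Suppose ζ₀ ∈ {1,...,p-1} is a root of f modulo p. Then for every j ∈ {2,...,d-1}, ord_p(f^{(j)}(ζ₀)/j!) = ord_p(binomial(d,j)), and consequently min over j ≥ 2 of (j + ord_p(f^{(j)}(ζ₀)/j!)) ≥ 2 + ℓ, while 1 + ord_p(f'(ζ₀)) = 1 + ℓ; hence s(f,ζ₀) := min_{i ≥ 0} (i + ord_p(f^{(i)}(ζ₀)/i!)) = min(ord_p(f(ζ₀)), 1 + ℓ). -/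
open Polynomial

private lemma aux3 : ∀ v : ℕ, 1 ≤ v → v + 2 ≤ 3 ^ v := by
  intro v hv
  induction v with
  | zero => omega
  | succ n ih =>
    rcases Nat.eq_or_lt_of_le hv with h | h
    · simp [← h]
    · have := ih (by omega)
      have : 3 ^ n ≥ 1 := Nat.one_le_pow _ _ (by norm_num)
      calc n + 1 + 2 ≤ 3 ^ n + 3 ^ n + 3 ^ n := by omega
        _ = 3 ^ (n + 1) := by ring

theorem stmt_18 (p : ℕ) (hp : p.Prime) (hodd : Odd p)
    (c₁ c₂ : ℤ) (d : ℕ) (hd : 2 ≤ d) (hpc : ¬ (p : ℤ) ∣ c₁ * c₂)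
    (ℓ : ℕ) (hℓ : ℓ = padicValNat p d)
    (ζ₀ : ℤ) (hζ₀ : 1 ≤ ζ₀ ∧ ζ₀ ≤ (p : ℤ) - 1)
    (f : Polynomial ℤ) (hf : f = C c₁ + C c₂ * X ^ d)
    (hroot : (p : ℤ) ∣ f.eval ζ₀) :
    (∀ j : ℕ, 2 ≤ j → j ≤ d - 1 →
      emultiplicity (p : ℤ) ((Polynomial.taylor ζ₀ f).coeff j) =
        (padicValNat p (d.choose j) : ℕ∞)) ∧
    (∀ j : ℕ, 2 ≤ j → j ≤ d →
      ((2 + ℓ : ℕ) : ℕ∞) ≤ (j : ℕ∞) + emultiplicity (p : ℤ) ((Polynomial.taylor ζ₀ f).coeff j)) ∧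
    ((1 : ℕ∞) + emultiplicity (p : ℤ) ((Polynomial.taylor ζ₀ f).coeff 1) = ((1 + ℓ : ℕ) : ℕ∞)) ∧
    (⨅ i : ℕ, ((i : ℕ∞) + emultiplicity (p : ℤ) ((Polynomial.taylor ζ₀ f).coeff i)) =
      min (emultiplicity (p : ℤ) (f.eval ζ₀)) ((1 + ℓ : ℕ) : ℕ∞)) := by
  haveI : Fact p.Prime := ⟨hp⟩
  have hp3 : 3 ≤ p := by
    have h2 := hp.two_le
    have := Nat.odd_iff.mp hodd
    omega
  have hpz : Prime (p : ℤ) := Int.prime_iff_natAbs_prime.mpr (by simpa using hp)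
  have hc₁ : ¬ (p : ℤ) ∣ c₁ := fun h => hpc (h.mul_right _)
  have hc₂ : ¬ (p : ℤ) ∣ c₂ := fun h => hpc (h.mul_left _)
  have hζ : ¬ (p : ℤ) ∣ ζ₀ := by
    intro h
    have := Int.le_of_dvd (by omega) h
    omega
  -- coefficient formula
  have hcoeff : ∀ j : ℕ, 1 ≤ j →
      (Polynomial.taylor ζ₀ f).coeff j = c₂ * (ζ₀ ^ (d - j) * (d.choose j : ℤ)) := by
    intro j hj
    rw [hf, taylor_apply, add_comp, C_comp, mul_comp, C_comp, pow_comp, X_comp,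
      coeff_add, coeff_C, if_neg (by omega), coeff_C_mul, coeff_X_add_C_pow]
    ring
  -- valuation of coefficients 1 ≤ j ≤ d
  have hval : ∀ j : ℕ, 1 ≤ j → j ≤ d →
      emultiplicity (p : ℤ) ((Polynomial.taylor ζ₀ f).coeff j)
        = (padicValNat p (d.choose j) : ℕ∞) := by
    intro j hj hjd
    have hch : 0 < d.choose j := Nat.choose_pos hjd
    rw [hcoeff j hj, emultiplicity_mul hpz, emultiplicity_mul hpz,
      emultiplicity_eq_zero.2 hc₂,
      emultiplicity_eq_zero.2 (fun h => hζ (hpz.dvd_of_dvd_pow h)),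
      Int.natCast_emultiplicity, ← padicValNat_eq_emultiplicity hch.ne']
    simp
  -- key inequality
  have hkey : ∀ j : ℕ, 2 ≤ j → j ≤ d →
      2 + ℓ ≤ j + padicValNat p (d.choose j) := by
    intro j hj hjd
    -- d * choose (d-1) (j-1) = choose d j * j
    have hid : d * (d - 1).choose (j - 1) = d.choose j * j := by
      have := Nat.add_one_mul_choose_eq (d - 1) (j - 1)
      have h1 : d - 1 + 1 = d := by omega
      have h2 : j - 1 + 1 = j := by omega
      rwa [h1, h2] at this
    have hch : 0 < d.choose j := Nat.choose_pos hjd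
    have hch' : 0 < (d - 1).choose (j - 1) := Nat.choose_pos (by omega)
    have hv : padicValNat p (d * (d - 1).choose (j - 1))
        = padicValNat p (d.choose j * j) := by rw [hid]
    rw [padicValNat.mul (by omega) (by omega), padicValNat.mul (by omega) (by omega)] at hv
    -- so ℓ ≤ v(choose d j) + v(j)
    have hle : ℓ ≤ padicValNat p (d.choose j) + padicValNat p j := by
      rw [hℓ]; omega
    -- v_p(j) + 2 ≤ j
    have hvj : padicValNat p j + 2 ≤ j := by
      set v := padicValNat p j with hv'
      rcases Nat.eq_zero_or_pos v with h0 | h0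
      · omega
      · have hdvd : p ^ v ∣ j := pow_padicValNat_dvd
        have hple : p ^ v ≤ j := Nat.le_of_dvd (by omega) hdvd
        have h3 : 3 ^ v ≤ p ^ v := Nat.pow_le_pow_left hp3 v
        have := aux3 v h0
        omega
    omega
  have part1 : ∀ j : ℕ, 2 ≤ j → j ≤ d - 1 →
      emultiplicity (p : ℤ) ((Polynomial.taylor ζ₀ f).coeff j)
        = (padicValNat p (d.choose j) : ℕ∞) :=
    fun j hj hjd => hval j (by omega) (by omega)
  have part2 : ∀ j : ℕ, 2 ≤ j → j ≤ d →
      ((2 + ℓ : ℕ) : ℕ∞) ≤ (j : ℕ∞) + emultiplicity (p : ℤ) ((Polynomial.taylor ζ₀ f).coeff j) := by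
    intro j hj hjd
    rw [hval j (by omega) hjd]
    rw [← Nat.cast_add]
    exact_mod_cast hkey j hj hjd
  have part3 : (1 : ℕ∞) + emultiplicity (p : ℤ) ((Polynomial.taylor ζ₀ f).coeff 1)
      = ((1 + ℓ : ℕ) : ℕ∞) := by
    rw [hval 1 le_rfl (by omega), Nat.choose_one_right, hℓ]
    rw [Nat.cast_add, Nat.cast_one]
  refine ⟨part1, part2, part3, ?_⟩
  -- part 4
  have hc0 : (Polynomial.taylor ζ₀ f).coeff 0 = f.eval ζ₀ := by
    rw [taylor_coeff_zero]
  apply le_antisymm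
  · apply le_min
    · calc _ ≤ ((0 : ℕ) : ℕ∞) + emultiplicity (p : ℤ) ((Polynomial.taylor ζ₀ f).coeff 0) :=
          iInf_le _ 0
        _ = _ := by rw [hc0]; simp
    · calc _ ≤ ((1 : ℕ) : ℕ∞) + emultiplicity (p : ℤ) ((Polynomial.taylor ζ₀ f).coeff 1) :=
          iInf_le _ 1
        _ = _ := by rw [Nat.cast_one, part3]
  · apply le_iInf
    intro i
    match i with
    | 0 =>
      rw [hc0]
      exact le_trans (min_le_left _ _) (by simp)
    | 1 =>
      rw [Nat.cast_one, part3]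
      exact min_le_right _ _
    | (n + 2) =>
      by_cases hid : n + 2 ≤ d
      · refine le_trans (min_le_right _ _) (le_trans ?_ (part2 (n + 2) (by omega) hid))
        exact Nat.cast_le.mpr (by omega)
      · have : (Polynomial.taylor ζ₀ f).coeff (n + 2) = 0 := by
          rw [hcoeff (n + 2) (by omega), Nat.choose_eq_zero_of_lt (by omega)]
          simp
        rw [this, emultiplicity_zero]
        simp
end
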